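/- Fix s ∈ (0,1), a ∈ (0,s), δ' > 0. For integers 1 ≤ k < ℓ and reals t ≥ 1, τ ≥ 1 with τ ≤ t, |k·t - ℓ·τ| < t/2, define ν(t,τ) = δ'·(τ^{-a} - t^{-a}). Then ν(t,τ) ≥ a·δ' / (2^{1-a}·3^a·(k·t)^a·ℓ^{1-a}). -/

import Mathlib

theorem stmt_16 (s a δ' : ℝ) (hs0 : 0 < s) (hs1 : s < 1) (ha0 : 0 < a) (has : a < s)
    (hδ' : 0 < δ') (k ℓ : ℤ) (hk : 1 ≤ k) (hkℓ : k < ℓ) (t τ : ℝ)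
    (hτ : 1 ≤ τ) (hτt : τ ≤ t) (hres : |(k : ℝ) * t - (ℓ : ℝ) * τ| < t / 2) :
    δ' * (τ ^ (-a) - t ^ (-a)) ≥
      a * δ' / (2 ^ (1 - a) * 3 ^ a * ((k : ℝ) * t) ^ a * (ℓ : ℝ) ^ (1 - a)) := by
  have ha1 : a < 1 := has.trans hs1
  have ht : (1:ℝ) ≤ t := hτ.trans hτt
  have ht0 : (0:ℝ) < t := by linarith
  have hτ0 : (0:ℝ) < τ := by linarith
  have hkr : (1:ℝ) ≤ (k:ℝ) := by exact_mod_cast hk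
  have hℓr : (2:ℝ) ≤ (ℓ:ℝ) := by exact_mod_cast (by omega : (2:ℤ) ≤ ℓ)
  have hkℓr : (k:ℝ) + 1 ≤ (ℓ:ℝ) := by exact_mod_cast hkℓ
  have hℓ0 : (0:ℝ) < (ℓ:ℝ) := by linarith
  have hk0 : (0:ℝ) < (k:ℝ) := by linarith
  obtain ⟨h1, h2⟩ := abs_lt.mp hres
  set M : ℝ := 3 * (k:ℝ) * t / (2 * (ℓ:ℝ)) with hMdef
  have hM0 : 0 < M := by positivity
  -- resonance consequences
  have hub : τ ≤ M := by
    rw [hMdef, le_div_iff₀ (by positivity)]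
    nlinarith
  have hgap2 : t ≤ 2 * (ℓ:ℝ) * (t - τ) := by nlinarith
  -- abbreviations
  have hP : (0:ℝ) < τ ^ a := Real.rpow_pos_of_pos hτ0 a
  have hQ : (0:ℝ) < t ^ a := Real.rpow_pos_of_pos ht0 a
  have hMa : (0:ℝ) < M ^ a := Real.rpow_pos_of_pos hM0 a
  set P : ℝ := τ ^ a with hPdef
  set Q : ℝ := t ^ a with hQdef
  -- weighted AM-GM (Bernoulli-type) inequality
  have key : (τ / t) ^ a * (1:ℝ) ^ (1 - a) ≤ a * (τ / t) + (1 - a) * 1 :=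
    Real.geom_mean_le_arith_mean2_weighted (w₁ := a) (w₂ := 1 - a) (p₁ := τ / t) (p₂ := 1)
      ha0.le (by linarith) (by positivity) zero_le_one (by ring)
  rw [Real.one_rpow, mul_one, Real.div_rpow hτ0.le ht0.le] at key
  have key2 : P * t ≤ Q * (a * τ + (1 - a) * t) := by
    rw [div_le_iff₀ hQ] at key
    have h3 : τ / t * t = τ := div_mul_cancel₀ _ ht0.ne'
    calc P * t ≤ (a * (τ / t) + (1 - a) * 1) * Q * t :=
          mul_le_mul_of_nonneg_right key ht0.le
      _ = Q * (a * (τ / t * t) + (1 - a) * t) := by ring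
      _ = Q * (a * τ + (1 - a) * t) := by rw [h3]
  have hPM : P ≤ M ^ a := Real.rpow_le_rpow hτ0.le hub ha0.le
  -- a * Q ≤ 2ℓ (Q - P)
  have hQP : a * Q ≤ 2 * (ℓ:ℝ) * (Q - P) := by
    have h4 : a * Q * t ≤ 2 * (ℓ:ℝ) * (Q - P) * t := by
      nlinarith [mul_le_mul_of_nonneg_left hgap2 (mul_pos ha0 hQ).le,
        mul_le_mul_of_nonneg_left key2 (by linarith : (0:ℝ) ≤ 2 * (ℓ:ℝ))]
    exact le_of_mul_le_mul_right h4 ht0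
  -- core bound with denominator 2ℓ M^a
  have core : a / (2 * (ℓ:ℝ) * M ^ a) ≤ τ ^ (-a) - t ^ (-a) := by
    rw [Real.rpow_neg hτ0.le, Real.rpow_neg ht0.le, ← hPdef, ← hQdef,
      inv_sub_inv hP.ne' hQ.ne', div_le_div_iff₀ (by positivity) (mul_pos hP hQ)]
    have e1 : a * Q * M ^ a ≤ 2 * (ℓ:ℝ) * (Q - P) * M ^ a :=
      mul_le_mul_of_nonneg_right hQP hMa.le
    have e2 : a * Q * P ≤ a * Q * M ^ a :=
      mul_le_mul_of_nonneg_left hPM (mul_pos ha0 hQ).le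
    nlinarith [e1, e2]
  -- denominator identity
  have hden : (2:ℝ) ^ (1 - a) * 3 ^ a * ((k:ℝ) * t) ^ a * (ℓ:ℝ) ^ (1 - a)
      = 2 * (ℓ:ℝ) * M ^ a := by
    have h2 : (2:ℝ) ^ (1 - a) = 2 / 2 ^ a := by
      rw [Real.rpow_sub two_pos, Real.rpow_one]
    have hℓe : (ℓ:ℝ) ^ (1 - a) = (ℓ:ℝ) / (ℓ:ℝ) ^ a := by
      rw [Real.rpow_sub hℓ0, Real.rpow_one]
    have hMe : M ^ a = 3 ^ a * ((k:ℝ) * t) ^ a / (2 ^ a * (ℓ:ℝ) ^ a) := by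
      rw [show M = 3 * ((k:ℝ) * t) / (2 * (ℓ:ℝ)) by rw [hMdef]; ring,
        Real.div_rpow (by positivity) (by positivity),
        Real.mul_rpow (by norm_num) (by positivity),
        Real.mul_rpow (by norm_num) hℓ0.le]
    rw [h2, hℓe, hMe]
    have h2a : (0:ℝ) < (2:ℝ) ^ a := Real.rpow_pos_of_pos two_pos a
    have hℓa : (0:ℝ) < (ℓ:ℝ) ^ a := Real.rpow_pos_of_pos hℓ0 a
    field_simp
  rw [hden, show a * δ' / (2 * (ℓ:ℝ) * M ^ a) = δ' * (a / (2 * (ℓ:ℝ) * M ^ a)) by ring]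
  exact mul_le_mul_of_nonneg_left core hδ'.le
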